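/- (Proposition 3.3, first part) For every integer k ≥ 3, b(k−1) ≤ (4/(k+1))·b(k−3). -/
import Mathlib


/-- `pq n = (p n, q n)` where `p n` (resp. `q n`) is the probability that the
exploitative player X, always guessing `2` or `n-1`, wins the misère search game
`MS(P_n)` against the uniformly random player R when playing first (resp. second):
`p 0 = p 1 = 0`, `q 0 = 0`,
`q n = (1/n) * ∑_{i=1}^{n} ((i-1)·p(i-1) + (n-i)·p(n-i) + 1)/n` for `n ≥ 1`, and
`p n = 1/n + ((n-2)/n) * q (n-2)` for `n ≥ 2`. -/
noncomputable def pq : ℕ → ℝ × ℝ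
  | 0 => (0, 0)
  | 1 =>
    (0,
      (1 / ((1 : ℕ) : ℝ)) * ∑ i ∈ (Finset.Icc 1 1).attach,
        (((i.1 - 1 : ℕ) : ℝ) * (pq (i.1 - 1)).1 +
          ((1 - i.1 : ℕ) : ℝ) * (pq (1 - i.1)).1 + 1) / ((1 : ℕ) : ℝ))
  | n + 2 =>
    (1 / ((n : ℝ) + 2) + ((n : ℝ) / ((n : ℝ) + 2)) * (pq n).2,
      (1 / ((n : ℝ) + 2)) * ∑ i ∈ (Finset.Icc 1 (n + 2)).attach,
        (((i.1 - 1 : ℕ) : ℝ) * (pq (i.1 - 1)).1 +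
          ((n + 2 - i.1 : ℕ) : ℝ) * (pq (n + 2 - i.1)).1 + 1) / ((n : ℝ) + 2))
  decreasing_by
  · have hm := i.2; simp only [Finset.mem_Icc] at hm; omega
  · have hm := i.2; simp only [Finset.mem_Icc] at hm; omega
  · omega
  · have hm := i.2; simp only [Finset.mem_Icc] at hm; omega
  · have hm := i.2; simp only [Finset.mem_Icc] at hm; omega

/-- X's winning probability in `MS(P_n)` playing first. -/
noncomputable def p (n : ℕ) : ℝ := (pq n).1

/-- X's winning probability in `MS(P_n)` playing second. -/
noncomputable def q (n : ℕ) : ℝ := (pq n).2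

/-- `s n = ∑_{i=1}^{n} i * p i`. -/
noncomputable def s (n : ℕ) : ℝ := ∑ i ∈ Finset.Icc 1 n, (i : ℝ) * p i

/-- `a k = (s k + 2(k+1)) / (k² + 7k + 6)`. -/
noncomputable def a (k : ℕ) : ℝ :=
  (s k + 2 * ((k : ℝ) + 1)) / ((k : ℝ) ^ 2 + 7 * (k : ℝ) + 6)

/-- `b k` is the maximum absolute difference between any two of `a k, a (k+1), a (k+2)`. -/
noncomputable def b (k : ℕ) : ℝ :=
  max |a k - a (k + 1)| (max |a (k + 1) - a (k + 2)| |a k - a (k + 2)|)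

lemma s_succ (n : ℕ) : s (n + 1) = s n + ((n : ℝ) + 1) * p (n + 1) := by
  rw [s, s, Finset.sum_Icc_succ_top (by omega : 1 ≤ n + 1)]
  push_cast; ring

lemma sumA (n : ℕ) : ∑ i ∈ Finset.Icc 1 (n + 1), ((i - 1 : ℕ) : ℝ) * p (i - 1) = s n := by
  induction n with
  | zero => simp [s, p, pq]
  | succ m ih =>
    rw [Finset.sum_Icc_succ_top (by omega : 1 ≤ m + 1 + 1), ih, s_succ]
    push_cast; ring_nf

lemma sumB (n : ℕ) :
    ∑ i ∈ Finset.Icc 1 (n + 1), (((n + 1) - i : ℕ) : ℝ) * p ((n + 1) - i) = s n := by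
  rw [← sumA n]
  refine Finset.sum_nbij' (fun i => n + 2 - i) (fun i => n + 2 - i) ?_ ?_ ?_ ?_ ?_ <;>
      simp only [Finset.mem_Icc] <;> intro a ha
  · omega
  · omega
  · omega
  · omega
  · congr 2 <;> omega

lemma q_eq (n : ℕ) : q (n + 1) = (2 * s n + ((n : ℝ) + 1)) / ((n : ℝ) + 1) ^ 2 := by
  cases n with
  | zero =>
    rw [q, pq,
      Finset.sum_attach (Finset.Icc 1 1) (fun i =>
        (((i - 1 : ℕ) : ℝ) * (pq (i - 1)).1 + ((1 - i : ℕ) : ℝ) * (pq (1 - i)).1 + 1)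
          / ((1 : ℕ) : ℝ))]
    simp [pq, s]
  | succ m =>
    rw [q, pq,
      Finset.sum_attach (Finset.Icc 1 (m + 2)) (fun i =>
        (((i - 1 : ℕ) : ℝ) * (pq (i - 1)).1 + ((m + 2 - i : ℕ) : ℝ) * (pq (m + 2 - i)).1 + 1)
          / ((m : ℝ) + 2))]
    rw [← Finset.sum_div, Finset.sum_add_distrib, Finset.sum_add_distrib, Finset.sum_const,
      Nat.card_Icc]
    have hA := sumA (m + 1)
    have hB := sumB (m + 1)
    simp only [p] at hA hB
    norm_num at hA hB ⊢
    rw [hA, hB]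
    have h2 : ((m : ℝ) + 2) ≠ 0 := by positivity
    field_simp
    ring

lemma p3 (m : ℕ) : ((m : ℝ) + 3) * p (m + 3) = 2 + 2 * s m / ((m : ℝ) + 1) := by
  have hp : p (m + 3) = 1 / ((m : ℝ) + 1 + 2) + (((m : ℝ) + 1) / ((m : ℝ) + 1 + 2)) * q (m + 1) := by
    rw [show m + 3 = (m + 1) + 2 from rfl, p, pq]; push_cast; rfl
  rw [hp, q_eq]
  have h1 : ((m : ℝ) + 1) ≠ 0 := by positivity
  have h3 : ((m : ℝ) + 3) ≠ 0 := by positivity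
  field_simp
  ring

lemma s_rec (m : ℕ) : s (m + 3) = s (m + 2) + 2 + 2 * s m / ((m : ℝ) + 1) := by
  have h := s_succ (m + 2)
  have h3 := p3 m
  push_cast at h
  rw [show (m : ℝ) + 2 + 1 = (m : ℝ) + 3 by ring] at h
  rw [show m + 2 + 1 = m + 3 from rfl] at h
  rw [h, h3]; ring

lemma a_rec (m : ℕ) :
    a (m + 3) - a (m + 2) =
      (-(2 * ((m : ℝ) + 6)) / (((m : ℝ) + 4) * ((m : ℝ) + 9))) * (a (m + 2) - a m) := by
  rw [a, a, a, s_rec m]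
  push_cast
  have h1 : ((m : ℝ) + 1) ≠ 0 := by positivity
  have h2 : (((m : ℝ) + 3) ^ 2 + 7 * ((m : ℝ) + 3) + 6) ≠ 0 := by positivity
  have h3 : (((m : ℝ) + 2) ^ 2 + 7 * ((m : ℝ) + 2) + 6) ≠ 0 := by positivity
  have h4 : ((m : ℝ) ^ 2 + 7 * (m : ℝ) + 6) ≠ 0 := by positivity
  have h5 : ((m : ℝ) + 4) ≠ 0 := by positivity
  have h6 : ((m : ℝ) + 9) ≠ 0 := by positivity
  field_simp
  ring

lemma b_nonneg (k : ℕ) : 0 ≤ b k :=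
  le_trans (abs_nonneg _) (le_max_left _ _)

/-- Proposition 3.3 (first part): for every `k ≥ 3`, `b (k-1) ≤ (4/(k+1)) * b (k-3)`. -/
theorem b_decay (k : ℕ) (hk : 3 ≤ k) :
    b (k - 1) ≤ (4 / ((k : ℝ) + 1)) * b (k - 3) := by
  obtain ⟨j, rfl⟩ : ∃ j, k = j + 3 := ⟨k - 3, by omega⟩
  have e1 : j + 3 - 1 = j + 2 := rfl
  have e3 : j + 3 - 3 = j := by omega
  rw [e1, e3]
  push_cast
  set x : ℝ := (j : ℝ) with hx
  have hx0 : (0 : ℝ) ≤ x := Nat.cast_nonneg j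
  set c₁ : ℝ := 2 * (x + 6) / ((x + 4) * (x + 9)) with hc₁
  set c₂ : ℝ := 2 * (x + 7) / ((x + 5) * (x + 10)) with hc₂
  have hc₁0 : 0 ≤ c₁ := by rw [hc₁]; positivity
  have hc₂0 : 0 ≤ c₂ := by rw [hc₂]; positivity
  have h1 := a_rec j
  have h2 := a_rec (j + 1)
  push_cast at h2
  have hA : |a (j + 3) - a (j + 2)| = c₁ * |a (j + 2) - a j| := by
    rw [h1, abs_mul, abs_div, abs_neg, abs_of_nonneg (by positivity : (0:ℝ) ≤ 2 * (x + 6)),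
      abs_of_nonneg (by positivity : (0:ℝ) ≤ (x + 4) * (x + 9)), hc₁]
  have hB : |a (j + 4) - a (j + 3)| = c₂ * |a (j + 3) - a (j + 1)| := by
    rw [show j + 4 = j + 1 + 3 from rfl, show j + 3 = j + 1 + 2 from rfl] at h2 ⊢
    rw [h2, abs_mul, abs_div, abs_neg,
      abs_of_nonneg (by positivity : (0:ℝ) ≤ 2 * (x + 1 + 6)),
      abs_of_nonneg (by positivity : (0:ℝ) ≤ (x + 1 + 4) * (x + 1 + 9)), hc₂]
    ring_nf
  have hbj : 0 ≤ b j := b_nonneg j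
  have e20 : |a (j + 2) - a j| ≤ b j := by
    rw [abs_sub_comm]
    exact le_trans (le_max_right _ _) (le_max_right _ _)
  have e21 : |a (j + 2) - a (j + 1)| ≤ b j := by
    rw [abs_sub_comm]
    exact le_trans (le_max_left _ _) (le_max_right _ _)
  have hAb : |a (j + 3) - a (j + 2)| ≤ c₁ * b j := by
    rw [hA]; exact mul_le_mul_of_nonneg_left e20 hc₁0
  have h31 : |a (j + 3) - a (j + 1)| ≤ c₁ * b j + b j := by
    calc |a (j + 3) - a (j + 1)| ≤ |a (j + 3) - a (j + 2)| + |a (j + 2) - a (j + 1)| :=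
          abs_sub_le _ _ _
      _ ≤ c₁ * b j + b j := add_le_add hAb e21
  have hBb : |a (j + 4) - a (j + 3)| ≤ c₂ * (c₁ * b j + b j) := by
    rw [hB]; exact mul_le_mul_of_nonneg_left h31 hc₂0
  have key : c₁ + c₂ * (1 + c₁) ≤ 4 / (x + 4) := by
    rw [← sub_nonneg]
    have heq : 4 / (x + 4) - (c₁ + c₂ * (1 + c₁)) =
        (10 * x ^ 2 + 154 * x + 528) / ((x + 4) * (x + 9) * (x + 5) * (x + 10)) := by
      rw [hc₁, hc₂]
      have h4 : (x + 4) ≠ 0 := by positivity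
      have h9 : (x + 9) ≠ 0 := by positivity
      have h5 : (x + 5) ≠ 0 := by positivity
      have h10 : (x + 10) ≠ 0 := by positivity
      field_simp
      ring
    rw [heq]; positivity
  have hsum : b (j + 2) ≤ |a (j + 3) - a (j + 2)| + |a (j + 4) - a (j + 3)| := by
    rw [b]
    refine max_le ?_ (max_le ?_ ?_)
    · rw [abs_sub_comm]
      exact le_add_of_le_of_nonneg le_rfl (abs_nonneg _)
    · rw [abs_sub_comm (a (j + 2 + 1))]
      exact le_add_of_nonneg_of_le (abs_nonneg _) le_rfl
    · calc |a (j + 2) - a (j + 2 + 2)| ≤ |a (j + 2) - a (j + 3)| + |a (j + 3) - a (j + 2 + 2)| :=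
            abs_sub_le _ _ _
        _ = |a (j + 3) - a (j + 2)| + |a (j + 4) - a (j + 3)| := by
            rw [show j+2+2=j+4 from rfl]; simp [abs_sub_comm]
  have hfin : c₁ * b j + c₂ * (c₁ * b j + b j) ≤ 4 / (x + 4) * b j := by
    nlinarith [mul_nonneg (sub_nonneg.2 key) hbj]
  calc b (j + 2) ≤ |a (j + 3) - a (j + 2)| + |a (j + 4) - a (j + 3)| := hsum
    _ ≤ c₁ * b j + c₂ * (c₁ * b j + b j) := add_le_add hAb hBb
    _ ≤ 4 / (x + 4) * b j := hfin
    _ = 4 / (x + 3 + 1) * b j := by ring_nf
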